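/- Let v : D → [0,1] be a function on the open unit disc which is subharmonic, C² near the origin, with v(0) = 0, and such that log v is subharmonic on D (with value −∞ where v = 0). Then Δv(0) ≤ 4. -/

import Mathlib

open Metric MeasureTheory

/-- The Laplacian `Δv = v_xx + v_yy` of a function `v : ℂ → ℝ`. -/
noncomputable def lap (v : ℂ → ℝ) (z : ℂ) : ℝ :=
  fderiv ℝ (fun w => fderiv ℝ v w 1) z 1 +
  fderiv ℝ (fun w => fderiv ℝ v w Complex.I) z Complex.I

/-- A real-valued function is subharmonic on a set `s` if it is upper-semicontinuous on
`s` and satisfies the sub-mean value inequality on every closed disc contained in `s`. -/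
def SubharmonicOnR (u : ℂ → ℝ) (s : Set ℂ) : Prop :=
  UpperSemicontinuousOn u s ∧
  ∀ z ∈ s, ∀ r : ℝ, 0 < r → closedBall z r ⊆ s →
    u z ≤ (1 / (2 * Real.pi)) *
      ∫ t in (0:ℝ)..(2 * Real.pi), u (z + r * Complex.exp (t * Complex.I))

/-- A function `h` is harmonic on `s` if it is `C²` there with vanishing Laplacian. -/
def HarmonicOnR (h : ℂ → ℝ) (s : Set ℂ) : Prop :=
  ContDiffOn ℝ 2 h s ∧ ∀ z ∈ s, lap h z = 0

/-- An `EReal`-valued function (allowing the value `−∞`) is subharmonic on `s` in the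
extended sense if it is upper-semicontinuous on `s` and, on every closed disc in `s`, it
is majorized by each continuous function harmonic inside the disc that dominates it on
the boundary circle. -/
def ESubharmonicOn (u : ℂ → EReal) (s : Set ℂ) : Prop :=
  UpperSemicontinuousOn u s ∧
  ∀ (c : ℂ) (r : ℝ), 0 < r → closedBall c r ⊆ s →
    ∀ h : ℂ → ℝ, ContinuousOn h (closedBall c r) → HarmonicOnR h (ball c r) →
      (∀ z ∈ sphere c r, u z ≤ (h z : EReal)) →
      ∀ z ∈ closedBall c r, u z ≤ (h z : EReal)

/-- The extended-real logarithm, with `log 0 = −∞`. -/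
noncomputable def elog (x : ℝ) : EReal :=
  if x = 0 then ⊥ else ((Real.log x : ℝ) : EReal)


lemma re_holo_fderiv {F : ℂ → ℂ} {U : Set ℂ} (hU : IsOpen U) (hF : DifferentiableOn ℂ F U)
    {z : ℂ} (hz : z ∈ U) (e : ℂ) :
    fderiv ℝ (fun w => (F w).re) z e = (deriv F z * e).re := by
  have hd : DifferentiableAt ℂ F z := hF.differentiableAt (hU.mem_nhds hz)
  have h1 : HasDerivAt F (deriv F z) z := hd.hasDerivAt
  have h2 := (h1.hasFDerivAt.restrictScalars ℝ)
  have h3 : HasFDerivAt (fun w => (F w).re)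
      (Complex.reCLM.comp (ContinuousLinearMap.restrictScalars ℝ
        (ContinuousLinearMap.smulRight 1 (deriv F z)))) z :=
    Complex.reCLM.hasFDerivAt.comp z h2
  rw [h3.fderiv]
  simp [mul_comm]

lemma re_holo_harmonic {F : ℂ → ℂ} {U : Set ℂ} (hU : IsOpen U)
    (hF : DifferentiableOn ℂ F U) : HarmonicOnR (fun w => (F w).re) U := by
  have hFd : DifferentiableOn ℂ (deriv F) U := ((hF.analyticOnNhd hU).deriv).differentiableOn
  constructor
  · have h1 : ContDiffOn ℂ 2 F U := hF.contDiffOn hU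
    exact Complex.reCLM.contDiff.comp_contDiffOn (h1.restrict_scalars ℝ)
  · intro z hz
    have e1 : (fun w => fderiv ℝ (fun w => (F w).re) w 1) =ᶠ[nhds z] fun w => (deriv F w).re := by
      filter_upwards [hU.mem_nhds hz] with w hw
      rw [re_holo_fderiv hU hF hw, mul_one]
    have e2 : (fun w => fderiv ℝ (fun w => (F w).re) w Complex.I)
        =ᶠ[nhds z] fun w => ((fun w => deriv F w * Complex.I) w).re := by
      filter_upwards [hU.mem_nhds hz] with w hw
      rw [re_holo_fderiv hU hF hw]
    have hG : DifferentiableOn ℂ (fun w => deriv F w * Complex.I) U := hFd.mul_const _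
    have d1 : fderiv ℝ (fun w => fderiv ℝ (fun w => (F w).re) w 1) z 1
        = (deriv (deriv F) z * 1).re := by
      rw [e1.fderiv_eq, re_holo_fderiv hU hFd hz]
    have d2 : fderiv ℝ (fun w => fderiv ℝ (fun w => (F w).re) w Complex.I) z Complex.I
        = (deriv (fun w => deriv F w * Complex.I) z * Complex.I).re := by
      rw [e2.fderiv_eq, re_holo_fderiv hU hG hz]
    have d3 : deriv (fun w => deriv F w * Complex.I) z = deriv (deriv F) z * Complex.I := by
      exact deriv_mul_const (hFd.differentiableAt (hU.mem_nhds hz)) _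
    rw [lap, d1, d2, d3]
    simp [mul_assoc, Complex.I_mul_I]

lemma elog_le_coe_iff {x y : ℝ} (hx : 0 ≤ x) : elog x ≤ (y : EReal) ↔ x ≤ Real.exp y := by
  unfold elog
  rcases eq_or_lt_of_le hx with h | h
  · simp [← h, (Real.exp_pos y).le]
  · rw [if_neg h.ne', EReal.coe_le_coe_iff]
    rw [← Real.exp_log h, Real.exp_le_exp, Real.exp_log h]

-- usc attains max on compact
lemma usc_exists_max {f : ℂ → ℝ} {A : Set ℂ} (hA : IsCompact A) (hne : A.Nonempty)
    (hf : UpperSemicontinuousOn f A) : ∃ x ∈ A, ∀ y ∈ A, f y ≤ f x := by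
  have hclosed : ∀ x ∈ A, IsClosed {z ∈ A | f x ≤ f z} := by
    intro x hx
    rw [← isSeqClosed_iff_isClosed]
    intro u p hu hup
    have hpA : p ∈ A := hA.isClosed.mem_of_tendsto hup (Filter.Eventually.of_forall fun n => (hu n).1)
    refine ⟨hpA, ?_⟩
    by_contra hlt
    push_neg at hlt
    have := hf p hpA (f x) hlt
    have h2 : Filter.Tendsto u Filter.atTop (nhdsWithin p A) := by
      rw [tendsto_nhdsWithin_iff]
      exact ⟨hup, Filter.Eventually.of_forall fun n => (hu n).1⟩
    have h3 := (h2.eventually this)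
    rcases h3.exists with ⟨n, hn⟩
    exact absurd (hu n).2 (not_le.mpr hn)
  haveI : Nonempty A.Elem := hne.to_subtype
  set t : A.Elem → Set ℂ := fun x => {z ∈ A | f x.1 ≤ f z} with ht
  have htd : Directed (· ⊇ ·) t := by
    intro a b
    rcases le_total (f a.1) (f b.1) with h | h
    · exact ⟨b, fun z hz => ⟨hz.1, le_trans h hz.2⟩, fun z hz => hz⟩
    · exact ⟨a, fun z hz => hz, fun z hz => ⟨hz.1, le_trans h hz.2⟩⟩
  have htn : ∀ x, (t x).Nonempty := fun x => ⟨x.1, x.2, le_refl _⟩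
  have htcl : ∀ x, IsClosed (t x) := fun x => hclosed x.1 x.2
  have htc : ∀ x, IsCompact (t x) :=
    fun x => hA.of_isClosed_subset (htcl x) (fun z hz => hz.1)
  obtain ⟨z, hz⟩ := IsCompact.nonempty_iInter_of_directed_nonempty_isCompact_isClosed
    t htd htn htc htcl
  refine ⟨z, (Set.mem_iInter.1 hz ⟨hne.some, hne.some_mem⟩).1, fun y hy =>
    (Set.mem_iInter.1 hz ⟨y, hy⟩).2⟩

lemma usc_mul_cont {v c : ℂ → ℝ} {A : Set ℂ} (hv : UpperSemicontinuousOn v A)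
    (hv0 : ∀ z ∈ A, 0 ≤ v z) (hc : ContinuousOn c A) (hc0 : ∀ z ∈ A, 0 ≤ c z) :
    UpperSemicontinuousOn (fun z => v z * c z) A := by
  intro x hx y hy
  set t := v x with htdef
  set s := c x with hsdef
  have ht0 : 0 ≤ t := hv0 x hx
  have hs0 : 0 ≤ s := hc0 x hx
  have hyts : 0 < y - t * s := by simp only [Set.mem_setOf_eq] at hy; linarith
  set δ : ℝ := min 1 ((y - t * s) / (2 * (t + s + 1))) with hδdef
  have hδpos : 0 < δ := by
    apply lt_min one_pos
    positivity
  have hδ1 : δ ≤ 1 := min_le_left _ _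
  have hδ2 : δ ≤ (y - t * s) / (2 * (t + s + 1)) := min_le_right _ _
  have hδ2' : δ * (2 * (t + s + 1)) ≤ y - t * s := by
    rw [← le_div_iff₀ (by positivity)]; exact hδ2
  have hvz : ∀ᶠ z in nhdsWithin x A, v z < t + δ := hv x hx (t + δ) (by linarith)
  have hcz : ∀ᶠ z in nhdsWithin x A, |c z - s| < δ := by
    have := hc x hx
    have h2 := Metric.tendsto_nhds.mp this δ hδpos
    filter_upwards [h2] with z hz
    rwa [Real.dist_eq] at hz
  filter_upwards [hvz, hcz, self_mem_nhdsWithin] with z h1 h2 h3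
  have hvz0 : 0 ≤ v z := hv0 z h3
  have hcz0 : 0 ≤ c z := hc0 z h3
  have hcz' : c z < s + δ := by cases abs_lt.mp h2; linarith
  have : v z * c z < (t + δ) * (s + δ) := by nlinarith
  nlinarith

lemma quad_bound {v : ℂ → ℝ} {ε : ℝ} (hε : 0 < ε) (hC2 : ContDiffOn ℝ 2 v (ball 0 ε))
    (hmin : IsLocalMin v 0) (hv0 : v 0 = 0) :
    ∃ K > 0, ∀ z : ℂ, ‖z‖ < ε / 2 → v z ≤ K * ‖z‖ ^ 2 := by
  set B := fderiv ℝ v with hBdef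
  have hsub : closedBall (0:ℂ) (ε/2) ⊆ ball 0 ε := closedBall_subset_ball (by linarith)
  have hB1 : ContDiffOn ℝ 1 B (ball 0 ε) := hC2.fderiv_of_isOpen isOpen_ball (by norm_num)
  have hBc : ContinuousOn (fderiv ℝ B) (ball 0 ε) :=
    hB1.continuousOn_fderiv_of_isOpen isOpen_ball le_rfl
  obtain ⟨C, hC⟩ := (isCompact_closedBall (0:ℂ) (ε/2)).exists_bound_of_continuousOn
    (f := fderiv ℝ B) (hBc.mono hsub)
  have hB0 : B 0 = 0 := hmin.fderiv_eq_zero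
  have hBdiff : ∀ x ∈ closedBall (0:ℂ) (ε/2), DifferentiableAt ℝ B x := fun x hx =>
    ((hB1.differentiableOn one_ne_zero).differentiableAt (isOpen_ball.mem_nhds (hsub hx)))
  have step1 : ∀ z ∈ closedBall (0:ℂ) (ε/2), ‖B z‖ ≤ C * ‖z‖ := by
    intro z hz
    have := (convex_closedBall (0:ℂ) (ε/2)).norm_image_sub_le_of_norm_fderiv_le
      hBdiff hC (mem_closedBall_self (by positivity)) hz
    simpa [hB0] using this
  have hvdiff : ∀ z : ℂ, ‖z‖ < ε/2 → ∀ x ∈ closedBall (0:ℂ) ‖z‖, DifferentiableAt ℝ v x := by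
    intro z hz x hx
    have hx' : x ∈ ball (0:ℂ) ε := by
      rw [mem_closedBall, dist_zero_right] at hx
      rw [mem_ball, dist_zero_right]; linarith
    exact ((hC2.differentiableOn (by norm_num)).differentiableAt (isOpen_ball.mem_nhds hx'))
  refine ⟨max C 0 + 1, by positivity, fun z hz => ?_⟩
  have step2 : ‖v z - v 0‖ ≤ (max C 0 + 1) * ‖z‖ * ‖z - 0‖ := by
    apply (convex_closedBall (0:ℂ) ‖z‖).norm_image_sub_le_of_norm_fderiv_le
      (hvdiff z hz) ?_ (mem_closedBall_self (norm_nonneg z))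
      (by rw [mem_closedBall, dist_zero_right])
    intro x hx
    have hx2 : x ∈ closedBall (0:ℂ) (ε/2) := by
      rw [mem_closedBall, dist_zero_right] at hx ⊢; linarith
    calc ‖fderiv ℝ v x‖ ≤ C * ‖x‖ := step1 x hx2
    _ ≤ (max C 0 + 1) * ‖z‖ := by
        rw [mem_closedBall, dist_zero_right] at hx
        nlinarith [norm_nonneg x, norm_nonneg z, le_max_left C 0, le_max_right C 0]
  rw [hv0, sub_zero, sub_zero] at step2
  calc v z ≤ ‖v z‖ := le_abs_self _
  _ ≤ (max C 0 + 1) * ‖z‖ * ‖z‖ := step2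
  _ = (max C 0 + 1) * ‖z‖ ^ 2 := by ring

lemma second_deriv_bound {f f' f'' : ℝ → ℝ} {δ c : ℝ} (hδ : 0 < δ)
    (h1 : ∀ t ∈ Set.Icc (0:ℝ) δ, HasDerivAt f (f' t) t)
    (h2 : ∀ t ∈ Set.Icc (0:ℝ) δ, HasDerivAt f' (f'' t) t)
    (hcont : ContinuousWithinAt f'' (Set.Icc 0 δ) 0)
    (hf0 : f 0 = 0) (hf'0 : f' 0 = 0)
    (hbound : ∀ t ∈ Set.Icc (0:ℝ) δ, f t ≤ c / 2 * t ^ 2) :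
    f'' 0 ≤ c := by
  by_contra hgt
  push_neg at hgt
  set c' := (c + f'' 0) / 2 with hc'
  have hc'1 : c < c' := by simp only [hc']; linarith
  have hc'2 : c' < f'' 0 := by simp only [hc']; linarith
  have hev : ∀ᶠ t in nhdsWithin 0 (Set.Icc (0:ℝ) δ), c' < f'' t :=
    continuousWithinAt_const.eventually_lt hcont hc'2
  obtain ⟨δ₀, hδ₀pos, hδ₀'⟩ := Metric.mem_nhdsWithin_iff.mp hev
  have hδ₀ : ∀ {t : ℝ}, dist t 0 < δ₀ → t ∈ Set.Icc (0:ℝ) δ → c' < f'' t := by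
    intro t h4 h3
    exact hδ₀' ⟨mem_ball.mpr h4, h3⟩
  set δ' := min δ (δ₀ / 2) with hδ'def
  have hδ'pos : 0 < δ' := lt_min hδ (by linarith)
  have hδ'le : δ' ≤ δ := min_le_left _ _
  have hf'' : ∀ t ∈ Set.Icc (0:ℝ) δ', c' ≤ f'' t := by
    intro t ht
    have h3 : t ∈ Set.Icc (0:ℝ) δ := ⟨ht.1, le_trans ht.2 hδ'le⟩
    have h4 : dist t 0 < δ₀ := by
      rw [Real.dist_eq, sub_zero, abs_of_nonneg ht.1]
      have := ht.2
      have : t ≤ δ₀ / 2 := le_trans this (min_le_right _ _)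
      linarith
    exact (hδ₀ h4 h3).le
  -- f' t ≥ c' * t on [0, δ']
  have hstep : ∀ t ∈ Set.Icc (0:ℝ) δ', c' * t ≤ f' t := by
    intro t ht
    rcases eq_or_lt_of_le ht.1 with h | h
    · simp [← h, hf'0]
    · have hsub : Set.Icc (0:ℝ) t ⊆ Set.Icc 0 δ := fun x hx =>
        ⟨hx.1, le_trans hx.2 (le_trans ht.2 hδ'le)⟩
      obtain ⟨ξ, hξ, hslope⟩ := exists_hasDerivAt_eq_slope f' f'' h
        (fun x hx => (h2 x (hsub hx)).continuousAt.continuousWithinAt)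
        (fun x hx => h2 x (hsub ⟨hx.1.le, hx.2.le⟩))
      have hξmem : ξ ∈ Set.Icc (0:ℝ) δ' := ⟨hξ.1.le, le_trans hξ.2.le ht.2⟩
      have := hf'' ξ hξmem
      rw [hf'0, sub_zero, sub_zero] at hslope
      have ht' : f' t = f'' ξ * t := by
        field_simp at hslope
        linarith [hslope]
      rw [ht']
      exact mul_le_mul_of_nonneg_right this ht.1
  -- monotonicity of g
  set g := fun t => f t - c' / 2 * t ^ 2 with hg
  have hgderiv : ∀ t ∈ Set.Icc (0:ℝ) δ', HasDerivAt g (f' t - c' * t) t := by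
    intro t ht
    have := (h1 t ⟨ht.1, le_trans ht.2 hδ'le⟩).sub
      (((hasDerivAt_pow 2 t).const_mul (c'/2)))
    exact this.congr_deriv (by ring)
  have hmono : MonotoneOn g (Set.Icc (0:ℝ) δ') := by
    apply monotoneOn_of_deriv_nonneg (convex_Icc _ _)
    · exact fun t ht => (hgderiv t ht).continuousAt.continuousWithinAt
    · intro t ht
      rw [interior_Icc] at ht
      exact (hgderiv t ⟨ht.1.le, ht.2.le⟩).differentiableAt.differentiableWithinAt
    · intro t ht
      rw [interior_Icc] at ht
      rw [(hgderiv t ⟨ht.1.le, ht.2.le⟩).deriv]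
      have := hstep t ⟨ht.1.le, ht.2.le⟩
      linarith
  have h5 := hmono (Set.left_mem_Icc.mpr hδ'pos.le) (Set.right_mem_Icc.mpr hδ'pos.le) hδ'pos.le
  simp only [hg, hf0] at h5
  have h6 := hbound δ' ⟨hδ'pos.le, hδ'le⟩
  have h7 : 0 < δ' ^ 2 := by positivity
  nlinarith [h7]

lemma dir_second_deriv {v : ℂ → ℝ} {ε : ℝ} (hε : 0 < ε)
    (hC2 : ContDiffOn ℝ 2 v (ball 0 ε)) (hgrad : fderiv ℝ v 0 = 0) (hv0 : v 0 = 0)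
    (e : ℂ) (he : ‖e‖ = 1) {r c : ℝ} (hr : 0 < r) (hc : 0 ≤ c)
    (hbound : ∀ z : ℂ, ‖z‖ < r → v z ≤ c / 2 * ‖z‖ ^ 2) :
    fderiv ℝ (fun w => fderiv ℝ v w e) 0 e ≤ c := by
  set δ := min ε r / 2 with hδdef
  have hδpos : 0 < δ := by positivity
  have hδε : δ < ε := by
    have : min ε r ≤ ε := min_le_left _ _
    simp only [hδdef]; linarith
  have hδr : δ < r := by
    have : min ε r ≤ r := min_le_right _ _
    simp only [hδdef]; linarith
  have hmem : ∀ t : ℝ, t ∈ Set.Icc (0:ℝ) δ → t • e ∈ ball (0:ℂ) ε := by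
    intro t ht
    rw [mem_ball, dist_zero_right, norm_smul, he, mul_one, Real.norm_eq_abs,
      abs_of_nonneg ht.1]
    linarith [ht.2]
  set B := fderiv ℝ v with hB
  set Fe := fun w => fderiv ℝ v w e with hFe
  have hB1 : ContDiffOn ℝ 1 B (ball 0 ε) := hC2.fderiv_of_isOpen isOpen_ball (by norm_num)
  have hFe1 : ContDiffOn ℝ 1 Fe (ball 0 ε) := hB1.clm_apply contDiffOn_const
  have hL : ∀ t : ℝ, HasDerivAt (fun s : ℝ => s • e) e t := by
    intro t
    simpa using (hasDerivAt_id t).smul_const e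
  have h1 : ∀ t ∈ Set.Icc (0:ℝ) δ, HasDerivAt (fun s : ℝ => v (s • e)) (Fe (t • e)) t := by
    intro t ht
    have hd : DifferentiableAt ℝ v (t • e) :=
      (hC2.differentiableOn (by norm_num)).differentiableAt
        (isOpen_ball.mem_nhds (hmem t ht))
    have := hd.hasFDerivAt.comp_hasDerivAt t (hL t)
    exact this
  have h2 : ∀ t ∈ Set.Icc (0:ℝ) δ,
      HasDerivAt (fun s : ℝ => Fe (s • e)) (fderiv ℝ Fe (t • e) e) t := by
    intro t ht
    have hd : DifferentiableAt ℝ Fe (t • e) :=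
      (hFe1.differentiableOn one_ne_zero).differentiableAt (isOpen_ball.mem_nhds (hmem t ht))
    exact hd.hasFDerivAt.comp_hasDerivAt t (hL t)
  have hcontF : ContinuousOn (fun w => fderiv ℝ Fe w e) (ball (0:ℂ) ε) := by
    have := hFe1.continuousOn_fderiv_of_isOpen isOpen_ball le_rfl
    exact ((ContinuousLinearMap.apply ℝ ℝ e).continuous.comp_continuousOn this)
  have hcont : ContinuousWithinAt (fun t : ℝ => fderiv ℝ Fe (t • e) e) (Set.Icc 0 δ) 0 := by
    have hmap : Set.MapsTo (fun t : ℝ => t • e) (Set.Icc (0:ℝ) δ) (ball (0:ℂ) ε) :=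
      fun t ht => hmem t ht
    have hsm : ContinuousWithinAt (fun t : ℝ => t • e) (Set.Icc (0:ℝ) δ) 0 :=
      (continuous_id.smul continuous_const).continuousWithinAt
    have := hcontF.continuousWithinAt (hmem 0 ⟨le_refl 0, hδpos.le⟩)
    have h0 : (0:ℝ) • e = 0 := zero_smul _ _
    exact ContinuousWithinAt.comp (by rw [h0] at this ⊢; exact this) hsm hmap
  have key := second_deriv_bound (c := c) hδpos h1 h2 hcont ?_ ?_ ?_
  · have h0 : (0:ℝ) • e = (0:ℂ) := zero_smul _ _
    rw [h0] at key
    exact key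
  · rw [zero_smul]; exact hv0
  · rw [zero_smul]
    show (B 0) e = 0
    rw [hgrad]; simp
  · intro t ht
    have := hbound (t • e) (by
      rw [norm_smul, he, mul_one, Real.norm_eq_abs, abs_of_nonneg ht.1]
      linarith [ht.2])
    rwa [norm_smul, he, mul_one, Real.norm_eq_abs, abs_of_nonneg ht.1] at this

lemma core_annulus (v : ℂ → ℝ)
    (hrange : ∀ z ∈ ball (0:ℂ) 1, v z ∈ Set.Icc (0:ℝ) 1)
    (husc : UpperSemicontinuousOn v (ball (0:ℂ) 1))
    (hlog : ESubharmonicOn (fun z => elog (v z)) (ball (0:ℂ) 1))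
    {K ρ r ε a b : ℝ} (hK : 0 < K) (hρ0 : 0 < ρ) (hρr : ρ < r) (hr1 : r < 1) (hε : 0 < ε)
    (hinner : ∀ z : ℂ, ‖z‖ = ρ → v z ≤ K * ρ ^ 2)
    (hgρ : a * Real.log ρ + b = 2 * Real.log ρ + Real.log K)
    (hgr : a * Real.log r + b = 0)
    (z₀ : ℂ) (hz₀ρ : ρ < ‖z₀‖) (hz₀r : ‖z₀‖ < r) :
    v z₀ ≤ Real.exp (ε * r ^ 2 + (a * Real.log ‖z₀‖ + b)) := by
  set g : ℂ → ℝ := fun z => a * Real.log ‖z‖ + b with hgdef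
  set A : Set ℂ := closedBall (0:ℂ) r \ ball 0 ρ with hAdef
  have hAcomp : IsCompact A := (isCompact_closedBall _ _).diff isOpen_ball
  have hAmem : ∀ z ∈ A, ρ ≤ ‖z‖ ∧ ‖z‖ ≤ r := by
    intro z hz
    constructor
    · have := hz.2; rw [mem_ball, dist_zero_right, not_lt] at this; exact this
    · have := hz.1; rwa [mem_closedBall, dist_zero_right] at this
  have hAsub : A ⊆ ball (0:ℂ) 1 := by
    intro z hz
    rw [mem_ball, dist_zero_right]
    exact lt_of_le_of_lt (hAmem z hz).2 hr1
  have hApos : ∀ z ∈ A, 0 < ‖z‖ := fun z hz => lt_of_lt_of_le hρ0 (hAmem z hz).1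
  have hz₀A : z₀ ∈ A := by
    constructor
    · rw [mem_closedBall, dist_zero_right]; exact hz₀r.le
    · rw [mem_ball, dist_zero_right, not_lt]; exact hz₀ρ.le
  set c : ℂ → ℝ := fun z => Real.exp (ε * ‖z‖ ^ 2 - g z) with hcdef
  have hcpos : ∀ z, 0 < c z := fun z => Real.exp_pos _
  have hccont : ContinuousOn c A := by
    apply ContinuousOn.rexp
    apply ContinuousOn.sub
    · exact (continuous_const.mul (continuous_norm.pow 2)).continuousOn
    · apply ContinuousOn.add ?_ continuousOn_const
      apply ContinuousOn.mul continuousOn_const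
      intro z hz
      exact (Real.continuousAt_log (hApos z hz).ne').comp
        continuous_norm.continuousAt |>.continuousWithinAt
  set ψ : ℂ → ℝ := fun z => v z * c z with hψdef
  have hψusc : UpperSemicontinuousOn ψ A :=
    usc_mul_cont (husc.mono hAsub) (fun z hz => (hrange z (hAsub hz)).1) hccont
      (fun z hz => (hcpos z).le)
  obtain ⟨z₁, hz₁A, hmax⟩ := usc_exists_max hAcomp ⟨z₀, hz₀A⟩ hψusc
  set M := ψ z₁ with hMdef
  -- Main claim: M ≤ exp (ε r²)
  have hclaim : M ≤ Real.exp (ε * r ^ 2) := by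
    by_contra hM
    push_neg at hM
    have hMpos : 0 < M := lt_trans (Real.exp_pos _) hM
    -- z₁ cannot be on the boundary circles
    have houter : ‖z₁‖ ≠ r := by
      intro hr'
      have hv1 : v z₁ ≤ 1 := (hrange z₁ (hAsub hz₁A)).2
      have hg1 : g z₁ = 0 := by rw [hgdef]; simp only [hr']; exact hgr
      have : M ≤ Real.exp (ε * r ^ 2) := by
        rw [hMdef, hψdef]
        calc v z₁ * c z₁ ≤ 1 * c z₁ :=
          mul_le_mul_of_nonneg_right hv1 (hcpos z₁).le
        _ = Real.exp (ε * r ^ 2) := by rw [one_mul, hcdef]; simp [hg1, hr']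
      linarith
    have hinner' : ‖z₁‖ ≠ ρ := by
      intro hρ'
      have hv1 : v z₁ ≤ K * ρ ^ 2 := hinner z₁ hρ'
      have hg1 : g z₁ = 2 * Real.log ρ + Real.log K := by
        rw [hgdef]; simp only [hρ']; exact hgρ
      have hKρ : Real.exp (2 * Real.log ρ + Real.log K) = K * ρ ^ 2 := by
        rw [Real.exp_add, Real.exp_log hK, two_mul, Real.exp_add, Real.exp_log hρ0]
        ring
      have hexp : c z₁ = Real.exp (ε * ρ ^ 2) / (K * ρ ^ 2) := by
        show Real.exp (ε * ‖z₁‖ ^ 2 - g z₁) = _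
        rw [hρ', hg1, Real.exp_sub, hKρ]
      have : M ≤ Real.exp (ε * ρ ^ 2) := by
        show v z₁ * c z₁ ≤ _
        rw [hexp, div_eq_inv_mul, ← mul_assoc]
        calc v z₁ * (K * ρ ^ 2)⁻¹ * Real.exp (ε * ρ ^ 2)
            ≤ (K * ρ ^ 2) * (K * ρ ^ 2)⁻¹ * Real.exp (ε * ρ ^ 2) := by
              apply mul_le_mul_of_nonneg_right _ (Real.exp_pos _).le
              apply mul_le_mul_of_nonneg_right hv1
              positivity
        _ = Real.exp (ε * ρ ^ 2) := by
              rw [mul_inv_cancel₀ (by positivity), one_mul]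
      have hle : Real.exp (ε * ρ ^ 2) ≤ Real.exp (ε * r ^ 2) := by
        apply Real.exp_le_exp.mpr
        have h9 : ρ ^ 2 ≤ r ^ 2 := by nlinarith
        exact mul_le_mul_of_nonneg_left h9 hε.le
      linarith
    have hz₁ρ : ρ < ‖z₁‖ := lt_of_le_of_ne (hAmem z₁ hz₁A).1 (Ne.symm hinner')
    have hz₁r : ‖z₁‖ < r := lt_of_le_of_ne (hAmem z₁ hz₁A).2 houter
    -- interior point: build harmonic comparison
    set s : ℝ := min (‖z₁‖ - ρ) (r - ‖z₁‖) / 2 with hsdef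
    have hs0 : 0 < s := by
      apply div_pos _ two_pos
      apply lt_min <;> linarith
    have hs1 : s ≤ (‖z₁‖ - ρ) / 2 := by
      have := min_le_left (‖z₁‖ - ρ) (r - ‖z₁‖); rw [hsdef]; linarith
    have hs2 : s ≤ (r - ‖z₁‖) / 2 := by
      have := min_le_right (‖z₁‖ - ρ) (r - ‖z₁‖); rw [hsdef]; linarith
    have hsz₁ : s < ‖z₁‖ := by linarith
    have hz₁0 : z₁ ≠ 0 := by
      intro h0
      rw [h0, norm_zero] at hz₁ρ
      linarith
    have hballA : closedBall z₁ s ⊆ A := by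
      intro z hz
      rw [mem_closedBall, dist_eq_norm] at hz
      have hlow : ‖z₁‖ - s ≤ ‖z‖ := by
        have := norm_sub_norm_le z₁ z
        rw [show z₁ - z = -(z - z₁) by ring, norm_neg] at this
        linarith
      have hup : ‖z‖ ≤ ‖z₁‖ + s := by
        have := norm_le_norm_add_norm_sub' z z₁  -- maybe wrong name
        calc ‖z‖ = ‖z₁ + (z - z₁)‖ := by ring_nf
        _ ≤ ‖z₁‖ + ‖z - z₁‖ := norm_add_le _ _
        _ ≤ ‖z₁‖ + s := by linarith
      constructor
      · rw [mem_closedBall, dist_zero_right]; linarith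
      · rw [mem_ball, dist_zero_right, not_lt]; linarith
    have hball1 : closedBall z₁ s ⊆ ball (0:ℂ) 1 := hballA.trans hAsub
    -- harmonic comparison function
    set C2 : ℂ := ((2 * ε : ℝ) : ℂ) * (starRingEnd ℂ) z₁ with hC2def
    set K₀ : ℝ := a * Real.log ‖z₁‖ + b + Real.log M - ε * (s ^ 2 - ‖z₁‖ ^ 2) with hK₀def
    set F : ℂ → ℂ := fun z => (a : ℂ) * Complex.log (z / z₁) + (K₀ : ℂ) - C2 * z with hFdef
    set h : ℂ → ℝ := fun z => (F z).re with hhdef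
    set Q : ℂ → ℝ := fun z => s ^ 2 - ‖z₁‖ ^ 2 + 2 * ((starRingEnd ℂ) z₁ * z).re with hQdef
    have hnormsq : ∀ w : ℂ, ‖w‖ ^ 2 = w.re ^ 2 + w.im ^ 2 := by
      intro w
      rw [Complex.sq_norm, Complex.normSq_apply]; ring
    have hz₁n : 0 < ‖z₁‖ := norm_pos_iff.mpr hz₁0
    have hre : ∀ z : ℂ, z ≠ 0 → h z = g z + Real.log M - ε * Q z := by
      intro z hz0
      have hlog1 : (Complex.log (z / z₁)).re = Real.log ‖z‖ - Real.log ‖z₁‖ := by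
        rw [Complex.log_re, norm_div,
          Real.log_div (by simpa using hz0) (by simpa using hz₁0)]
      have h1 : ((a : ℂ) * Complex.log (z / z₁)).re
          = a * (Real.log ‖z‖ - Real.log ‖z₁‖) := by
        rw [← hlog1]; simp [Complex.mul_re]
      have h2 : (C2 * z).re = 2 * ε * ((starRingEnd ℂ) z₁ * z).re := by
        rw [hC2def, mul_assoc]
        simp [Complex.mul_re]
      show (F z).re = _
      simp only [hFdef, Complex.sub_re, Complex.add_re, h1, h2, Complex.ofReal_re]
      have hgz : g z = a * Real.log ‖z‖ + b := rfl
      have hQz : Q z = s ^ 2 - ‖z₁‖ ^ 2 + 2 * ((starRingEnd ℂ) z₁ * z).re := rfl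
      rw [hgz, hQz, hK₀def]
      ring
    have hQsph : ∀ z : ℂ, ‖z - z₁‖ = s → Q z = ‖z‖ ^ 2 := by
      intro z hzs
      have h1 : (z.re - z₁.re) ^ 2 + (z.im - z₁.im) ^ 2 = s ^ 2 := by
        have h0 := hnormsq (z - z₁)
        rw [hzs] at h0
        simpa [Complex.sub_re, Complex.sub_im] using h0.symm
      have h2 : ((starRingEnd ℂ) z₁ * z).re = z₁.re * z.re + z₁.im * z.im := by
        simp [Complex.mul_re]
      have hQz : Q z = s ^ 2 - ‖z₁‖ ^ 2 + 2 * ((starRingEnd ℂ) z₁ * z).re := rfl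
      rw [hQz, h2, hnormsq z, hnormsq z₁]
      linear_combination -h1
    have hQz₁ : Q z₁ = s ^ 2 + ‖z₁‖ ^ 2 := by
      have h2 : ((starRingEnd ℂ) z₁ * z₁).re = z₁.re ^ 2 + z₁.im ^ 2 := by
        simp [Complex.mul_re]; ring
      have hQz : Q z₁ = s ^ 2 - ‖z₁‖ ^ 2 + 2 * ((starRingEnd ℂ) z₁ * z₁).re := rfl
      rw [hQz, h2, hnormsq z₁]
      ring
    set U : Set ℂ := {z : ℂ | 0 < (z / z₁).re} with hUdef
    have hUopen : IsOpen U :=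
      isOpen_lt continuous_const (Complex.continuous_re.comp (continuous_id.div_const z₁))
    have hsubU : closedBall z₁ s ⊆ U := by
      intro z hz
      rw [mem_closedBall, dist_eq_norm] at hz
      have hd : z / z₁ - 1 = (z - z₁) / z₁ := by field_simp
      have hn : ‖z / z₁ - 1‖ ≤ s / ‖z₁‖ := by
        rw [hd, norm_div]
        gcongr
      have hre1 : |(z / z₁ - 1).re| ≤ ‖z / z₁ - 1‖ := by
        exact Complex.abs_re_le_norm _
      have hslt : s / ‖z₁‖ < 1 := (div_lt_one hz₁n).mpr hsz₁
      have hdecomp : (z / z₁).re = 1 + (z / z₁ - 1).re := by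
        simp [Complex.sub_re, Complex.one_re]
      show 0 < (z / z₁).re
      rw [hdecomp]
      have := abs_le.mp (le_trans hre1 hn)
      linarith [this.1]
    have hFdiff : DifferentiableOn ℂ F U := by
      intro z hz
      apply DifferentiableAt.differentiableWithinAt
      have h1 : DifferentiableAt ℂ (fun z : ℂ => Complex.log (z / z₁)) z := by
        apply DifferentiableAt.clog
        · exact differentiableAt_id.div_const z₁
        · exact Or.inl hz
      simp only [hFdef]
      exact ((h1.const_mul _).add_const _).sub (differentiableAt_id.const_mul C2)
    have hharmU := re_holo_harmonic hUopen hFdiff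
    have hballU : ball z₁ s ⊆ U := ball_subset_closedBall.trans hsubU
    have hharm : HarmonicOnR h (ball z₁ s) :=
      ⟨hharmU.1.mono hballU, fun z hz => hharmU.2 z (hballU hz)⟩
    have hconth : ContinuousOn h (closedBall z₁ s) := (hharmU.1.continuousOn).mono hsubU
    have hbdry : ∀ z ∈ sphere z₁ s, elog (v z) ≤ ((h z : ℝ) : EReal) := by
      intro z hzs
      rw [mem_sphere, dist_eq_norm] at hzs
      have hzA : z ∈ A := hballA (by rw [mem_closedBall, dist_eq_norm]; exact hzs.le)
      have hz0 : z ≠ 0 := norm_pos_iff.mp (hApos z hzA)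
      rw [elog_le_coe_iff (hrange z (hAsub hzA)).1, hre z hz0, hQsph z hzs]
      have hψz : v z * c z ≤ M := hmax z hzA
      have hcz : c z = Real.exp (ε * ‖z‖ ^ 2 - g z) := rfl
      calc v z = v z * c z * Real.exp (g z - ε * ‖z‖ ^ 2) := by
            rw [hcz, mul_assoc, ← Real.exp_add]; simp
      _ ≤ M * Real.exp (g z - ε * ‖z‖ ^ 2) :=
            mul_le_mul_of_nonneg_right hψz (Real.exp_pos _).le
      _ = Real.exp (g z + Real.log M - ε * ‖z‖ ^ 2) := by
            rw [show g z + Real.log M - ε * ‖z‖ ^ 2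
              = Real.log M + (g z - ε * ‖z‖ ^ 2) by ring, Real.exp_add,
              Real.exp_log hMpos]
    have happ := hlog.2 z₁ s hs0 hball1 h hconth hharm hbdry z₁ (mem_closedBall_self hs0.le)
    rw [elog_le_coe_iff (hrange z₁ (hAsub hz₁A)).1, hre z₁ hz₁0, hQz₁] at happ
    have hfinal : M ≤ M * Real.exp (-(ε * s ^ 2)) := by
      calc M = v z₁ * c z₁ := rfl
      _ ≤ Real.exp (g z₁ + Real.log M - ε * (s ^ 2 + ‖z₁‖ ^ 2)) * c z₁ :=
            mul_le_mul_of_nonneg_right happ (hcpos z₁).le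
      _ = M * Real.exp (-(ε * s ^ 2)) := by
            show _ * Real.exp (ε * ‖z₁‖ ^ 2 - g z₁) = _
            rw [← Real.exp_add, show g z₁ + Real.log M - ε * (s ^ 2 + ‖z₁‖ ^ 2)
              + (ε * ‖z₁‖ ^ 2 - g z₁) = Real.log M + -(ε * s ^ 2) by ring,
              Real.exp_add, Real.exp_log hMpos]
    have hlt1 : Real.exp (-(ε * s ^ 2)) < 1 := by
      rw [Real.exp_lt_one_iff]
      have : 0 < ε * s ^ 2 := by positivity
      linarith
    nlinarith [hfinal, hlt1, hMpos]
  -- extract conclusion from hclaim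
  have h1 : ψ z₀ ≤ Real.exp (ε * r ^ 2) := le_trans (hmax z₀ hz₀A) hclaim
  have h2 : v z₀ = ψ z₀ * Real.exp (g z₀ - ε * ‖z₀‖ ^ 2) := by
    rw [hψdef, hcdef, mul_assoc, ← Real.exp_add]
    simp
  rw [h2]
  calc ψ z₀ * Real.exp (g z₀ - ε * ‖z₀‖ ^ 2)
      ≤ Real.exp (ε * r ^ 2) * Real.exp (g z₀ - ε * ‖z₀‖ ^ 2) := by
        apply mul_le_mul_of_nonneg_right h1 (Real.exp_pos _).le
  _ = Real.exp (ε * r ^ 2 + g z₀ - ε * ‖z₀‖ ^ 2) := by rw [← Real.exp_add]; ring_nf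
  _ ≤ Real.exp (ε * r ^ 2 + (a * Real.log ‖z₀‖ + b)) := by
      apply Real.exp_le_exp.mpr
      have h8 : 0 ≤ ε * ‖z₀‖ ^ 2 := by positivity
      have hg0 : g z₀ = a * Real.log ‖z₀‖ + b := rfl
      linarith [hg0]

set_option maxHeartbeats 1000000 in
lemma v_le_sq (v : ℂ → ℝ)
    (hrange : ∀ z ∈ ball (0:ℂ) 1, v z ∈ Set.Icc (0:ℝ) 1)
    (husc : UpperSemicontinuousOn v (ball (0:ℂ) 1))
    (hlog : ESubharmonicOn (fun z => elog (v z)) (ball (0:ℂ) 1))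
    {K δ₁ : ℝ} (hK : 0 < K) (hδ₁ : 0 < δ₁)
    (hTaylor : ∀ z : ℂ, ‖z‖ ≤ δ₁ → v z ≤ K * ‖z‖ ^ 2)
    {r : ℝ} (hr0 : 0 < r) (hr1 : r < 1) (z₀ : ℂ) (hz₀ : ‖z₀‖ < r) :
    v z₀ ≤ ‖z₀‖ ^ 2 / r ^ 2 := by
  rcases eq_or_ne z₀ 0 with h0 | hn
  · rw [h0]
    have := hTaylor 0 (by simpa using hδ₁.le)
    simp only [norm_zero] at this ⊢
    simpa using this
  have hz₀pos : 0 < ‖z₀‖ := norm_pos_iff.mpr hn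
  set lr := Real.log r with hlrdef
  set l0 := Real.log ‖z₀‖ with hl0def
  set lK := Real.log K with hlKdef
  set L := lr - l0 with hLdef
  have hLpos : 0 < L := by
    have := Real.log_lt_log hz₀pos hz₀
    rw [hLdef]; linarith
  set T := |L * (lK + 2 * lr)| with hTdef
  have hT0 : 0 ≤ T := abs_nonneg _
  have hexpL : Real.exp (-(2 * L)) = ‖z₀‖ ^ 2 / r ^ 2 := by
    rw [show -(2 * L) = l0 + l0 - (lr + lr) by rw [hLdef]; ring, Real.exp_sub,
      Real.exp_add, Real.exp_add, hl0def, hlrdef, Real.exp_log hz₀pos, Real.exp_log hr0]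
    ring
  have hclaim : ∀ η > 0, v z₀ ≤ ‖z₀‖ ^ 2 / r ^ 2 * Real.exp η := by
    intro η hη
    set ε := η / (2 * r ^ 2) with hεdef
    have hε : 0 < ε := by positivity
    set ρ := min (min δ₁ (‖z₀‖ / 2)) (r * Real.exp (-(2 * T / η) - 1)) with hρdef
    have hρ0 : 0 < ρ := by
      apply lt_min (lt_min hδ₁ (by positivity)) (by positivity)
    have hρz₀ : ρ < ‖z₀‖ := by
      calc ρ ≤ ‖z₀‖ / 2 := le_trans (min_le_left _ _) (min_le_right _ _)
      _ < ‖z₀‖ := by linarith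
    have hρδ : ρ ≤ δ₁ := le_trans (min_le_left _ _) (min_le_left _ _)
    have hρr : ρ < r := lt_trans hρz₀ hz₀
    set lρ := Real.log ρ with hlρdef
    set D := lr - lρ with hDdef
    have hD : 2 * T / η + 1 ≤ D := by
      have h1 : ρ ≤ r * Real.exp (-(2 * T / η) - 1) := min_le_right _ _
      have h2 : lρ ≤ Real.log (r * Real.exp (-(2 * T / η) - 1)) := by
        rw [hlρdef]; exact Real.log_le_log hρ0 h1
      rw [Real.log_mul hr0.ne' (Real.exp_pos _).ne', Real.log_exp] at h2
      rw [hDdef]; linarith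
    have hDpos : 0 < D := by
      have : 0 ≤ 2 * T / η := by positivity
      linarith
    have hlρlr : lρ - lr ≠ 0 := by
      have : lρ < lr := by rw [hDdef] at hDpos; linarith
      linarith
    set a := (2 * lρ + lK) / (lρ - lr) with hadef
    set b := -(a * lr) with hbdef
    have hgρ : a * lρ + b = 2 * lρ + lK := by
      have hdm := div_mul_cancel₀ (2 * lρ + lK) hlρlr
      rw [hadef, hbdef]
      linear_combination hdm
    have hgr : a * lr + b = 0 := by rw [hbdef]; ring
    have hinner : ∀ z : ℂ, ‖z‖ = ρ → v z ≤ K * ρ ^ 2 := by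
      intro z hz
      have := hTaylor z (by rw [hz]; exact hρδ)
      rwa [hz] at this
    have hcore := core_annulus v hrange husc hlog hK hρ0 hρr hr1 hε hinner hgρ hgr
      z₀ hρz₀ hz₀
    -- bound the exponent
    have haD : a * D = 2 * D - (2 * lr + lK) := by
      have h3 : a * (lρ - lr) = 2 * lρ + lK := by
        rw [hadef]; exact div_mul_cancel₀ _ hlρlr
      have h4 : lρ - lr = -D := by rw [hDdef]; ring
      rw [h4] at h3
      rw [hDdef] at h3 ⊢
      linarith
    have h2a : (2 - a) * D = 2 * lr + lK := by linarith [haD]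
    have hTD : T ≤ D * (η / 2) := by
      have h5 : (2 * T / η + 1) * (η / 2) ≤ D * (η / 2) :=
        mul_le_mul_of_nonneg_right hD (by positivity)
      have h6 : (2 * T / η + 1) * (η / 2) = T + η / 2 := by field_simp
      linarith
    have hbnd : a * l0 + b ≤ η / 2 - 2 * L := by
      have h7 : (2 - a) * L * D = (2 * lr + lK) * L := by
        rw [mul_comm ((2:ℝ) - a) L, mul_assoc, h2a]; ring
      have h8 : (2 * lr + lK) * L ≤ T := by
        have e : (2 * lr + lK) * L = L * (lK + 2 * lr) := by ring
        rw [e, hTdef]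
        exact le_abs_self _
      have h9 : (2 - a) * L * D ≤ (η / 2) * D := by
        rw [h7]
        calc (2 * lr + lK) * L ≤ T := h8
        _ ≤ D * (η / 2) := hTD
        _ = (η / 2) * D := by ring
      have h10 : (2 - a) * L ≤ η / 2 := le_of_mul_le_mul_right h9 hDpos
      have h11 : a * l0 + b = -(a * L) := by rw [hbdef, hLdef]; ring
      rw [h11]
      nlinarith [h10]
    have hεr : ε * r ^ 2 = η / 2 := by rw [hεdef]; field_simp
    calc v z₀ ≤ Real.exp (ε * r ^ 2 + (a * Real.log ‖z₀‖ + b)) := hcore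
    _ ≤ Real.exp (η / 2 + (η / 2 - 2 * L)) := by
        apply Real.exp_le_exp.mpr
        rw [hεr]
        have : a * Real.log ‖z₀‖ + b = a * l0 + b := by rw [hl0def]
        linarith [hbnd, this.ge, this.le]
    _ = ‖z₀‖ ^ 2 / r ^ 2 * Real.exp η := by
        rw [show η / 2 + (η / 2 - 2 * L) = η + -(2 * L) by ring, Real.exp_add, hexpL]
        ring
  -- conclude by letting η → 0
  by_contra hX
  push_neg at hX
  set X := ‖z₀‖ ^ 2 / r ^ 2 with hXdef
  have hXpos : 0 < X := by rw [hXdef]; positivity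
  set w := v z₀ with hwdef
  have hwX : 1 < w / X := (one_lt_div hXpos).mpr hX
  set η := Real.log (w / X) / 2 with hηdef
  have hη : 0 < η := by
    rw [hηdef]
    have := Real.log_pos hwX
    linarith
  have hE : Real.exp η * Real.exp η = w / X := by
    rw [← Real.exp_add, show η + η = Real.log (w / X) by rw [hηdef]; ring]
    exact Real.exp_log (by positivity)
  have hE1 : 1 < Real.exp η := by
    rw [show (1:ℝ) = Real.exp 0 from (Real.exp_zero).symm]
    exact Real.exp_lt_exp.mpr hη
  have hw := hclaim η hη
  have hXw : X * (w / X) = w := by field_simp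
  nlinarith [hw, hE, hXw, hE1, hXpos, hX]


/-- Sibony's extremal estimate: if `v : D → [0,1]` is subharmonic on the unit disc, `C²`
near the origin, `v(0) = 0`, and `log v` is subharmonic on `D` (with value `−∞` where
`v = 0`), then `Δv(0) ≤ 4`. -/
theorem stmt6 (v : ℂ → ℝ)
    (hrange : ∀ z ∈ ball (0:ℂ) 1, v z ∈ Set.Icc (0:ℝ) 1)
    (hsub : SubharmonicOnR v (ball (0:ℂ) 1))
    (hC2 : ∃ ε > 0, ContDiffOn ℝ 2 v (ball (0:ℂ) ε))
    (hv0 : v 0 = 0)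
    (hlog : ESubharmonicOn (fun z => elog (v z)) (ball (0:ℂ) 1)) :
    lap v 0 ≤ 4 := by
  obtain ⟨ε₀, hε₀, hC2'⟩ := hC2
  have hmin : IsLocalMin v 0 := by
    have hball : ball (0:ℂ) 1 ∈ nhds (0:ℂ) := isOpen_ball.mem_nhds (mem_ball_self one_pos)
    filter_upwards [hball] with z hz
    rw [hv0]
    exact (hrange z hz).1
  have hgrad : fderiv ℝ v 0 = 0 := hmin.fderiv_eq_zero
  obtain ⟨K, hKpos, hQ⟩ := quad_bound hε₀ hC2' hmin hv0
  have hTaylor : ∀ z : ℂ, ‖z‖ ≤ ε₀ / 4 → v z ≤ K * ‖z‖ ^ 2 := by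
    intro z hz
    exact hQ z (by linarith)
  have hδ₁ : 0 < ε₀ / 4 := by positivity
  -- for each radius r < 1, lap v 0 ≤ 4 / r²
  have hmain : ∀ r : ℝ, 0 < r → r < 1 → lap v 0 ≤ 4 / r ^ 2 := by
    intro r hr0 hr1
    have hb : ∀ z : ℂ, ‖z‖ < r → v z ≤ (2 / r ^ 2) / 2 * ‖z‖ ^ 2 := by
      intro z hz
      have := v_le_sq v hrange hsub.1 hlog hKpos hδ₁ hTaylor hr0 hr1 z hz
      have he : (2 / r ^ 2) / 2 * ‖z‖ ^ 2 = ‖z‖ ^ 2 / r ^ 2 := by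
        field_simp
      rw [he]
      exact this
    have hc0 : (0:ℝ) ≤ 2 / r ^ 2 := by positivity
    have h1 := dir_second_deriv hε₀ hC2' hgrad hv0 1 (by simp) hr0 hc0 hb
    have h2 := dir_second_deriv hε₀ hC2' hgrad hv0 Complex.I (by simp) hr0 hc0 hb
    rw [lap]
    have he : 4 / r ^ 2 = 2 / r ^ 2 + 2 / r ^ 2 := by ring
    rw [he]
    exact add_le_add h1 h2
  -- let r → 1
  by_contra hfour
  push_neg at hfour
  set X := lap v 0 with hXdef
  set Y := (4 / X + 1) / 2 with hYdef
  have hX4 : (4:ℝ) < X := hfour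
  have hX0 : (0:ℝ) < X := by linarith
  have hY0 : 0 < Y := by rw [hYdef]; positivity
  have hY1 : Y < 1 := by
    have : 4 / X < 1 := (div_lt_one hX0).mpr hX4
    rw [hYdef]; linarith
  have hXY : X * Y = (4 + X) / 2 := by
    rw [hYdef]; field_simp
  set r := Real.sqrt Y with hrdef
  have hr0 : 0 < r := Real.sqrt_pos.mpr hY0
  have hr1 : r < 1 := by
    rw [hrdef, show (1:ℝ) = Real.sqrt 1 from Real.sqrt_one.symm]
    exact Real.sqrt_lt_sqrt hY0.le hY1
  have hrsq : r ^ 2 = Y := Real.sq_sqrt hY0.le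
  have := hmain r hr0 hr1
  rw [hrsq] at this
  -- X ≤ 4 / Y but X * Y = (4+X)/2 > 4 gives contradiction
  have h4Y : 4 / Y < X := by
    rw [div_lt_iff₀ hY0]
    nlinarith [hXY]
  linarith
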